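/- Annulus lemma for a boundary point: Let D and D̃ be concentric closed disks centered at O with radii R > r > 0, B = D \ int(D̃) the annulus, and P a point on the boundary circle of D̃ (dist(O,P) = r). Let n ≥ 4 be even and draw n lines through P at equal angles π/n, giving 2n angular sectors at P numbered consecutively clockwise. Then for every 1 ≤ k ≤ n, the sum of the areas of the intersection of B with the k-th sector and of the intersection of B with the (k+n)-th sector equals (1/n)·π(R² − r²). -/

import Mathlib

open Real MeasureTheory
open scoped ENNReal

/-- The closed angular sector at `P` of directions with angles in `[a, b]`. -/
def angularSector (P : ℂ) (a b : ℝ) : Set ℂ :=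
  {z : ℂ | ∃ t : ℝ, 0 ≤ t ∧ ∃ φ : ℝ, a ≤ φ ∧ φ ≤ b ∧
    z = P + (t : ℂ) * Complex.exp ((φ : ℝ) * Complex.I)}



open Set in
/-- lintegral polar change of variables for `ℝ × ℝ`. -/
theorem bk_lintegral_polar_real (f : ℝ × ℝ → ℝ≥0∞) :
    ∫⁻ p in polarCoord.target, ENNReal.ofReal p.1 * f (polarCoord.symm p) = ∫⁻ p, f p := by
  set B : ℝ × ℝ → ℝ × ℝ →L[ℝ] ℝ × ℝ := fun p =>
    LinearMap.toContinuousLinearMap (Matrix.toLin (Module.Basis.finTwoProd ℝ) (Module.Basis.finTwoProd ℝ)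
      !![Real.cos p.2, -p.1 * Real.sin p.2; Real.sin p.2, p.1 * Real.cos p.2])
  have B_det : ∀ p, (B p).det = p.1 := by
    intro p
    conv_rhs => rw [← one_mul p.1, ← Real.cos_sq_add_sin_sq p.2]
    simp only [B, neg_mul, LinearMap.det_toContinuousLinearMap, LinearMap.det_toLin,
      Matrix.det_fin_two_of, sub_neg_eq_add]
    ring
  symm
  calc
    ∫⁻ p, f p = ∫⁻ p in polarCoord.source, f p := by
      rw [← setLIntegral_univ]
      exact (setLIntegral_congr polarCoord_source_ae_eq_univ).symm
    _ = ∫⁻ p in polarCoord.symm '' polarCoord.target, f p := by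
      rw [polarCoord.symm_image_target_eq_source]
    _ = ∫⁻ p in polarCoord.target, ENNReal.ofReal |(B p).det| * f (polarCoord.symm p) := by
      exact lintegral_image_eq_lintegral_abs_det_fderiv_mul volume
        polarCoord.open_target.measurableSet
        (fun p _ => (hasFDerivAt_polarCoord_symm p).hasFDerivWithinAt)
        polarCoord.symm.injOn f
    _ = ∫⁻ p in polarCoord.target, ENNReal.ofReal p.1 * f (polarCoord.symm p) := by
      refine setLIntegral_congr_fun polarCoord.open_target.measurableSet
        (fun p hp => ?_)
      rw [B_det, abs_of_pos hp.1]

theorem bk_lintegral_polar_complex (f : ℂ → ℝ≥0∞) :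
    ∫⁻ p in polarCoord.target, ENNReal.ofReal p.1 * f (Complex.polarCoord.symm p) =
      ∫⁻ z, f z := by
  have h := Complex.volume_preserving_equiv_real_prod.symm
  rw [← h.lintegral_comp_emb Complex.measurableEquivRealProd.symm.measurableEmbedding,
    ← bk_lintegral_polar_real]
  rfl

theorem bk_arg_texp {t φ : ℝ} (ht : 0 < t) (hφ : φ ∈ Set.Ioc (-π) π) :
    Complex.arg ((t : ℂ) * Complex.exp ((φ : ℝ) * Complex.I)) = φ := by
  rw [Complex.exp_mul_I]
  push_cast
  rw [Complex.arg_real_mul _ ht, Complex.arg_cos_add_sin_mul_I hφ]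

theorem bk_abs_texp (t φ : ℝ) :
    ‖(t : ℂ) * Complex.exp ((φ : ℝ) * Complex.I)‖ = |t| := by
  rw [norm_mul, Complex.norm_exp_ofReal_mul_I, mul_one, Complex.norm_real, Real.norm_eq_abs]

theorem bk_mem_sector_iff {α γ t φ : ℝ} (hα : -π < α) (hγ : γ ≤ π) (hαγ : α ≤ γ)
    (ht : 0 < t) (hφ : φ ∈ Set.Ioo (-π) π) :
    (t : ℂ) * Complex.exp ((φ : ℝ) * Complex.I) ∈ angularSector 0 α γ ↔ α ≤ φ ∧ φ ≤ γ := by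
  constructor
  · rintro ⟨t', ht', φ', h1, h2, hz⟩
    rw [zero_add] at hz
    have habs : |t| = |t'| := by rw [← bk_abs_texp t φ, hz, bk_abs_texp]
    rw [abs_of_pos ht, abs_of_nonneg ht'] at habs
    have ht'0 : 0 < t' := habs ▸ ht
    have harg : φ = φ' := by
      rw [← bk_arg_texp ht ⟨hφ.1, hφ.2.le⟩, hz,
        bk_arg_texp ht'0 ⟨lt_of_lt_of_le hα h1, le_trans h2 hγ⟩]
    exact harg ▸ ⟨h1, h2⟩
  · rintro ⟨h1, h2⟩
    exact ⟨t, ht.le, φ, h1, h2, by rw [zero_add]⟩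

theorem bk_sector_eq {α γ : ℝ} (hα : -π < α) (hγ : γ ≤ π) (hαγ : α ≤ γ) :
    angularSector 0 α γ =
      insert 0 {z : ℂ | z ≠ 0 ∧ Complex.arg z ∈ Set.Icc α γ} := by
  ext z
  constructor
  · rintro ⟨t, ht, φ, h1, h2, hz⟩
    rw [zero_add] at hz
    rcases eq_or_ne z 0 with h0 | h0
    · exact Set.mem_insert_iff.2 (Or.inl h0)
    · refine Set.mem_insert_of_mem _ ⟨h0, ?_⟩
      have ht0 : 0 < t := by
        rcases ht.lt_or_eq with h | h
        · exact h
        · exfalso; apply h0; rw [hz, ← h]; simp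
      rw [hz, bk_arg_texp ht0 ⟨lt_of_lt_of_le hα h1, le_trans h2 hγ⟩]
      exact ⟨h1, h2⟩
  · rintro (h0 | ⟨h0, h1, h2⟩)
    · exact ⟨0, le_refl 0, α, le_refl α, hαγ, by simp [h0]⟩
    · exact ⟨‖z‖, norm_nonneg z,
        Complex.arg z, h1, h2, by rw [zero_add, Complex.norm_mul_exp_arg_mul_I]⟩

theorem bk_sector_measurable {α γ : ℝ} (hα : -π < α) (hγ : γ ≤ π) (hαγ : α ≤ γ) :
    MeasurableSet (angularSector 0 α γ) := by
  rw [bk_sector_eq hα hγ hαγ]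
  refine MeasurableSet.insert ?_ 0
  exact ((MeasurableSet.compl (measurableSet_singleton 0)).inter
    (Complex.measurable_arg measurableSet_Icc)).congr (by ext z; simp [Set.mem_setOf_eq]; tauto)

theorem bk_sector_preimage (P : ℂ) (a b β : ℝ) :
    angularSector P a b =
      (fun z => Complex.exp ((β : ℝ) * Complex.I) * (z - P)) ⁻¹'
        angularSector 0 (a + β) (b + β) := by
  ext z
  constructor
  · rintro ⟨t, ht, φ, h1, h2, hz⟩
    refine ⟨t, ht, φ + β, by linarith, by linarith, ?_⟩
    rw [zero_add, hz]
    push_cast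
    rw [add_mul, Complex.exp_add]
    ring
  · rintro ⟨t, ht, φ, h1, h2, hz⟩
    simp only [zero_add] at hz
    refine ⟨t, ht, φ - β, by linarith, by linarith, ?_⟩
    have he := Complex.exp_ne_zero ((β : ℝ) * Complex.I)
    rw [← sub_eq_iff_eq_add']
    have hb : Complex.exp ((β : ℝ) * Complex.I) * (z - P) =
        Complex.exp ((β : ℝ) * Complex.I) *
          ((t : ℂ) * Complex.exp (((φ - β : ℝ) : ℂ) * Complex.I)) := by
      rw [hz]
      push_cast
      rw [sub_mul, Complex.exp_sub]
      field_simp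
    exact mul_left_cancel₀ he hb

/-- annulus condition along a ray -/
theorem bk_ray_cond {R r t φ : ℝ} (hr : 0 < r) (hrR : r < R) (w : ℂ)
    (hw : ‖w‖ = r) (ht : 0 < t) :
    (r ≤ ‖(t : ℂ) * Complex.exp ((φ : ℝ) * Complex.I) - w‖ ∧
      ‖(t : ℂ) * Complex.exp ((φ : ℝ) * Complex.I) - w‖ ≤ R) ↔
    (2 * (Complex.exp ((φ : ℝ) * Complex.I) * (starRingEnd ℂ) w).re ≤ t ∧
      t ≤ (Complex.exp ((φ : ℝ) * Complex.I) * (starRingEnd ℂ) w).re +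
        Real.sqrt ((Complex.exp ((φ : ℝ) * Complex.I) * (starRingEnd ℂ) w).re ^ 2 +
          (R ^ 2 - r ^ 2))) := by
  set z := (t : ℂ) * Complex.exp ((φ : ℝ) * Complex.I) with hz
  set c := (Complex.exp ((φ : ℝ) * Complex.I) * (starRingEnd ℂ) w).re with hc
  set K := R ^ 2 - r ^ 2 with hK
  have hK0 : 0 < K := by nlinarith
  set s := Real.sqrt (c ^ 2 + K) with hs
  have hs0 : 0 ≤ s := Real.sqrt_nonneg _
  have hs2 : s ^ 2 = c ^ 2 + K := Real.sq_sqrt (by positivity)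
  have habs : ‖z‖ = |t| := by
    rw [hz, norm_mul, Complex.norm_exp_ofReal_mul_I, mul_one, Complex.norm_real, Real.norm_eq_abs]
  have hnormSq : Complex.normSq (z - w) = t ^ 2 + r ^ 2 - 2 * t * c := by
    rw [Complex.normSq_sub]
    have h1 : Complex.normSq z = t ^ 2 := by
      rw [← Complex.sq_norm, habs, sq_abs]
    have h2 : Complex.normSq w = r ^ 2 := by rw [← Complex.sq_norm, hw]
    have h3 : (z * (starRingEnd ℂ) w).re = t * c := by
      rw [hz, mul_assoc, Complex.re_ofReal_mul]
    rw [h1, h2, h3]; ring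
  have hsq : (‖z - w‖) ^ 2 = t ^ 2 + r ^ 2 - 2 * t * c := by
    rw [Complex.sq_norm, hnormSq]
  have habs0 : 0 ≤ ‖z - w‖ := norm_nonneg _
  constructor
  · rintro ⟨h1, h2⟩
    have e1 : r ^ 2 ≤ t ^ 2 + r ^ 2 - 2 * t * c := by
      rw [← hsq]; exact pow_le_pow_left₀ hr.le h1 2
    have e2 : t ^ 2 + r ^ 2 - 2 * t * c ≤ R ^ 2 := by
      rw [← hsq]; exact pow_le_pow_left₀ habs0 h2 2
    constructor
    · nlinarith
    · nlinarith [sq_nonneg (t - c - s), sq_nonneg (t - c + s)]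
  · rintro ⟨h1, h2⟩
    have e1 : r ^ 2 ≤ t ^ 2 + r ^ 2 - 2 * t * c := by nlinarith
    have e2 : t ^ 2 + r ^ 2 - 2 * t * c ≤ R ^ 2 := by
      nlinarith [sq_nonneg (s - c), sq_nonneg (s + c)]
    constructor
    · nlinarith [hsq, sq_nonneg (‖z - w‖ - r)]
    · nlinarith [hsq, sq_nonneg (‖z - w‖ - R)]

/-- the 1-D ray integral -/
theorem bk_ray_integral {a b : ℝ} (hb : 0 ≤ b) (hab : a ≤ b) :
    ∫⁻ t in Set.Ioi (0 : ℝ), (Set.Icc a b).indicator ENNReal.ofReal t =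
      ENNReal.ofReal ((b ^ 2 - max a 0 ^ 2) / 2) := by
  set m := max a 0 with hm
  have hm0 : 0 ≤ m := le_max_right a 0
  have hmb : m ≤ b := max_le hab hb
  have hset : (volume : Measure ℝ).restrict (Set.Ioi 0 ∩ Set.Icc a b) =
      volume.restrict (Set.Ioc m b) := by
    apply Measure.restrict_congr_set
    rw [MeasureTheory.ae_eq_set]
    constructor
    · refine measure_mono_null (fun x hx => ?_) (measure_singleton m)
      simp only [Set.mem_diff, Set.mem_inter_iff, Set.mem_Ioi, Set.mem_Icc, Set.mem_Ioc,
        not_and, not_le, Set.mem_singleton_iff] at hx ⊢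
      obtain ⟨⟨hx0, hxa, hxb⟩, hrest⟩ := hx
      have hxm : x ≤ m := by
        by_contra h
        push_neg at h
        exact absurd (hrest h) (not_lt.2 hxb)
      exact le_antisymm hxm (max_le hxa hx0.le)
    · have hempty : Set.Ioc m b \ (Set.Ioi 0 ∩ Set.Icc a b) = ∅ := by
        rw [Set.eq_empty_iff_forall_notMem]
        rintro x ⟨⟨hmx, hxb⟩, hno⟩
        exact hno ⟨lt_of_le_of_lt hm0 hmx,
          le_trans (le_max_left a 0) hmx.le, hxb⟩
      rw [hempty, measure_empty]
  rw [lintegral_indicator measurableSet_Icc, Measure.restrict_restrict measurableSet_Icc,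
    Set.inter_comm, hset, ← ofReal_integral_eq_lintegral_ofReal
      (intervalIntegral.intervalIntegrable_id.1 : IntegrableOn _ (Set.Ioc m b) volume)
      ((ae_restrict_iff' measurableSet_Ioc).2 (Filter.Eventually.of_forall
        fun x hx => le_trans hm0 hx.1.le)),
    ← intervalIntegral.integral_of_le hmb, integral_id]

theorem bk_pair {K cv sv : ℝ} (hK : 0 < K) (hs0 : 0 ≤ sv) (hs2 : sv ^ 2 = cv ^ 2 + K) :
    ((cv + sv) ^ 2 - max (2 * cv) 0 ^ 2) / 2 + ((-cv + sv) ^ 2 - max (2 * -cv) 0 ^ 2) / 2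
      = K := by
  rcases le_total 0 cv with h | h
  · rw [max_eq_left (by linarith), max_eq_right (by linarith)]
    linear_combination hs2
  · rw [max_eq_right (by linarith), max_eq_left (by linarith)]
    linear_combination hs2

theorem bk_pair_nonneg {K cv sv : ℝ} (hK : 0 < K) (hs0 : 0 ≤ sv) (hs2 : sv ^ 2 = cv ^ 2 + K) :
    0 ≤ ((cv + sv) ^ 2 - max (2 * cv) 0 ^ 2) / 2 := by
  have hlt : cv < sv := by nlinarith [sq_nonneg (sv + cv)]
  rcases le_total 0 cv with h | h
  · rw [max_eq_left (by linarith)]; nlinarith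
  · rw [max_eq_right (by linarith)]; nlinarith [sq_nonneg (cv + sv)]

theorem bk_key {R r : ℝ} (hr : 0 < r) (hrR : r < R) (w : ℂ) (hw : ‖w‖ = r)
    {δ : ℝ} (hδ0 : 0 < δ) (hδ : δ ≤ π / 4) :
    volume ({z : ℂ | r ≤ ‖z - w‖ ∧ ‖z - w‖ ≤ R} ∩
        angularSector 0 (-(π / 2)) (-(π / 2) + δ)) +
      volume ({z : ℂ | r ≤ ‖z - w‖ ∧ ‖z - w‖ ≤ R} ∩
        angularSector 0 (π / 2) (π / 2 + δ)) =
      ENNReal.ofReal (δ * (R ^ 2 - r ^ 2)) := by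
  have hπ : 0 < π := pi_pos
  set K := R ^ 2 - r ^ 2 with hKdef
  have hK : 0 < K := by nlinarith
  set A : Set ℂ := {z : ℂ | r ≤ ‖z - w‖ ∧ ‖z - w‖ ≤ R} with hAdef
  have hA : MeasurableSet A := by
    have : A = Metric.closedBall w R \ Metric.ball w r := by
      ext z
      simp only [hAdef, Set.mem_setOf_eq, Set.mem_diff, Metric.mem_closedBall,
        Metric.mem_ball, Complex.dist_eq, not_lt]
      tauto
    rw [this]
    exact measurableSet_closedBall.diff measurableSet_ball
  set c : ℝ → ℝ := fun φ => (Complex.exp ((φ : ℝ) * Complex.I) * (starRingEnd ℂ) w).re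
    with hcdef
  have hc_cont : Continuous c := by
    apply Complex.continuous_re.comp
    exact (Complex.continuous_exp.comp (by continuity)).mul continuous_const
  set sv : ℝ → ℝ := fun φ => Real.sqrt (c φ ^ 2 + K) with hsdef
  have hs_cont : Continuous sv := by
    apply Real.continuous_sqrt.comp
    exact ((hc_cont.pow 2).add continuous_const)
  have hs0 : ∀ φ, 0 ≤ sv φ := fun φ => Real.sqrt_nonneg _
  have hs2 : ∀ φ, sv φ ^ 2 = c φ ^ 2 + K := fun φ => Real.sq_sqrt (by positivity)
  set g : ℝ → ℝ≥0∞ := fun φ =>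
    ENNReal.ofReal (((c φ + sv φ) ^ 2 - max (2 * c φ) 0 ^ 2) / 2) with hgdef
  have hg_meas : Measurable g := by
    apply ENNReal.measurable_ofReal.comp
    apply Measurable.div_const
    exact (((hc_cont.add hs_cont).pow 2).sub
      ((((continuous_const.mul hc_cont)).max continuous_const).pow 2)).measurable
  -- the main step
  have step : ∀ α : ℝ, -π < α → α + δ < π →
      volume (A ∩ angularSector 0 α (α + δ)) = ∫⁻ φ in Set.Icc α (α + δ), g φ := by
    intro α hα hαδ
    have hαδ' : α + δ ≤ π := hαδ.le
    have hαγ : α ≤ α + δ := by linarith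
    have hS : MeasurableSet (angularSector 0 α (α + δ)) :=
      bk_sector_measurable hα hαδ' hαγ
    set T : Set (ℝ × ℝ) := {p : ℝ × ℝ | (α ≤ p.2 ∧ p.2 ≤ α + δ) ∧
      2 * c p.2 ≤ p.1 ∧ p.1 ≤ c p.2 + sv p.2} with hTdef
    have hT : MeasurableSet T := by
      apply MeasurableSet.inter
      · exact (measurableSet_le measurable_const measurable_snd).inter
          (measurableSet_le measurable_snd measurable_const)
      · exact (measurableSet_le ((measurable_const.mul (hc_cont.measurable.comp measurable_snd)))
            measurable_fst).inter
          (measurableSet_le measurable_fst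
            ((hc_cont.add hs_cont).measurable.comp measurable_snd))
    have hsymm : ∀ p : ℝ × ℝ,
        Complex.polarCoord.symm p = (p.1 : ℂ) * Complex.exp ((p.2 : ℝ) * Complex.I) := by
      intro p
      rw [Complex.polarCoord_symm_apply, Complex.exp_mul_I]
      push_cast
      ring
    calc
      volume (A ∩ angularSector 0 α (α + δ))
          = ∫⁻ z, (A ∩ angularSector 0 α (α + δ)).indicator 1 z :=
        (lintegral_indicator_one (hA.inter hS)).symm
      _ = ∫⁻ p in polarCoord.target,
            ENNReal.ofReal p.1 *
              (A ∩ angularSector 0 α (α + δ)).indicator 1 (Complex.polarCoord.symm p) :=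
        (bk_lintegral_polar_complex _).symm
      _ = ∫⁻ p in polarCoord.target, T.indicator (fun p : ℝ × ℝ => ENNReal.ofReal p.1) p := by
        refine setLIntegral_congr_fun polarCoord.open_target.measurableSet
          (fun p hp => ?_)
        have hp1 : 0 < p.1 := hp.1
        have hp2 : p.2 ∈ Set.Ioo (-π) π := hp.2
        have hiff : Complex.polarCoord.symm p ∈ A ∩ angularSector 0 α (α + δ) ↔ p ∈ T := by
          rw [hsymm p]
          simp only [Set.mem_inter_iff, hAdef, Set.mem_setOf_eq, hTdef]
          rw [bk_ray_cond hr hrR w hw hp1, bk_mem_sector_iff hα hαδ' hαγ hp1 hp2]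
          tauto
        by_cases h : p ∈ T
        · rw [Set.indicator_of_mem h, Set.indicator_of_mem (hiff.2 h)]
          simp
        · rw [Set.indicator_of_notMem h, Set.indicator_of_notMem (fun hh => h (hiff.1 hh)),
            mul_zero]
      _ = ∫⁻ φ in Set.Ioo (-π) π, ∫⁻ t in Set.Ioi (0 : ℝ),
            T.indicator (fun p : ℝ × ℝ => ENNReal.ofReal p.1) (t, φ) := by
        rw [polarCoord_target, MeasureTheory.Measure.volume_eq_prod, ← Measure.prod_restrict,
          lintegral_prod_symm]
        exact ((measurable_fst.ennreal_ofReal).indicator hT).aemeasurable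
      _ = ∫⁻ φ in Set.Ioo (-π) π, (Set.Icc α (α + δ)).indicator g φ := by
        refine lintegral_congr fun φ => ?_
        by_cases hφ : φ ∈ Set.Icc α (α + δ)
        · rw [Set.indicator_of_mem hφ]
          have hrw : ∀ t : ℝ, T.indicator (fun p : ℝ × ℝ => ENNReal.ofReal p.1) (t, φ) =
              (Set.Icc (2 * c φ) (c φ + sv φ)).indicator ENNReal.ofReal t := by
            intro t
            have hmemiff : (t, φ) ∈ T ↔ t ∈ Set.Icc (2 * c φ) (c φ + sv φ)  := by
              simp only [hTdef, Set.mem_setOf_eq, Set.mem_Icc]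
              have := hφ.1
              have := hφ.2
              tauto
            by_cases h : (t, φ) ∈ T
            · rw [Set.indicator_of_mem h, Set.indicator_of_mem (hmemiff.1 h)]
            · rw [Set.indicator_of_notMem h,
                Set.indicator_of_notMem (fun hh => h (hmemiff.2 hh))]
          simp only [hrw]
          rw [bk_ray_integral (by nlinarith [hs0 φ, hs2 φ]) (by nlinarith [hs0 φ, hs2 φ])]
        · rw [Set.indicator_of_notMem hφ]
          have hrw : ∀ t : ℝ, T.indicator (fun p : ℝ × ℝ => ENNReal.ofReal p.1) (t, φ) = 0 := by
            intro t
            exact Set.indicator_of_notMem (fun hh => hφ ⟨hh.1.1, hh.1.2⟩) _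
          simp only [hrw]
          exact lintegral_zero
      _ = ∫⁻ φ in Set.Icc α (α + δ), g φ := by
        rw [lintegral_indicator measurableSet_Icc,
          Measure.restrict_restrict measurableSet_Icc,
          Set.inter_eq_self_of_subset_left
            (fun x hx => Set.mem_Ioo.2 ⟨lt_of_lt_of_le hα (Set.mem_Icc.1 hx).1,
              lt_of_le_of_lt (Set.mem_Icc.1 hx).2 hαδ⟩)]
  -- apply the step to both sectors
  have h1 := step (-(π / 2)) (by linarith) (by linarith)
  have h2 := step (π / 2) (by linarith) (by linarith)
  rw [h1, h2]
  -- translate the second integral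
  have htrans : ∫⁻ φ in Set.Icc (π / 2) (π / 2 + δ), g φ =
      ∫⁻ φ in Set.Icc (-(π / 2)) (-(π / 2) + δ), g (φ + π) := by
    have hmp : MeasurePreserving (fun x : ℝ => x + π) volume volume :=
      measurePreserving_add_right volume π
    have hemb : MeasurableEmbedding (fun x : ℝ => x + π) :=
      (MeasurableEquiv.addRight (π : ℝ)).measurableEmbedding
    rw [← hmp.setLIntegral_comp_preimage_emb hemb g (Set.Icc (π / 2) (π / 2 + δ)),
      Set.preimage_add_const_Icc]
    have e1 : π / 2 - π = -(π / 2) := by ring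
    have e2 : π / 2 + δ - π = -(π / 2) + δ := by ring
    rw [e1, e2]
  rw [htrans, ← lintegral_add_left' hg_meas.aemeasurable.restrict]
  have hpt : ∀ φ : ℝ, g φ + g (φ + π) = ENNReal.ofReal K := by
    intro φ
    have hcpi : c (φ + π) = - c φ := by
      have hexp : Complex.exp ((↑(φ + π) : ℂ) * Complex.I)
          = -Complex.exp ((φ : ℝ) * Complex.I) := by
        push_cast
        rw [add_mul, Complex.exp_add, Complex.exp_pi_mul_I]
        ring
      simp only [hcdef, hexp, neg_mul, Complex.neg_re]
    have hspi : sv (φ + π) = sv φ := by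
      simp only [hsdef, hcpi, neg_sq]
    rw [hgdef]
    simp only [hcpi, hspi]
    rw [← ENNReal.ofReal_add (bk_pair_nonneg hK (hs0 φ) (hs2 φ))
      (by
        have := bk_pair_nonneg (cv := -c φ) (sv := sv φ) hK (hs0 φ) (by rw [neg_sq]; exact hs2 φ)
        simpa using this)]
    congr 1
    have := bk_pair (cv := c φ) (sv := sv φ) hK (hs0 φ) (hs2 φ)
    linarith [this]
  simp only [hpt]
  rw [setLIntegral_const, Real.volume_Icc, ← ENNReal.ofReal_mul hK.le]
  congr 1
  ring_nf

theorem bk_annulus_measurable {R r : ℝ} (w : ℂ) :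
    MeasurableSet {z : ℂ | r ≤ ‖z - w‖ ∧ ‖z - w‖ ≤ R} := by
  have : {z : ℂ | r ≤ ‖z - w‖ ∧ ‖z - w‖ ≤ R} =
      Metric.closedBall w R \ Metric.ball w r := by
    ext z
    simp only [Set.mem_setOf_eq, Set.mem_diff, Metric.mem_closedBall, Metric.mem_ball,
      Complex.dist_eq, not_lt]
    tauto
  rw [this]
  exact measurableSet_closedBall.diff measurableSet_ball

theorem bk_map_mp (β : ℝ) (P : ℂ) :
    MeasurePreserving (fun z : ℂ => Complex.exp ((β : ℝ) * Complex.I) * (z - P))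
      volume volume := by
  have h1 : MeasurePreserving (fun z : ℂ => z - P) volume volume := by
    simpa [sub_eq_add_neg] using measurePreserving_add_right (volume : Measure ℂ) (-P)
  have h2 : MeasurePreserving (fun z : ℂ => Complex.exp ((β : ℝ) * Complex.I) * z)
      volume volume := by
    have h := (rotation (Circle.exp β)).measurePreserving
    have : ⇑(rotation (Circle.exp β)) = fun z : ℂ => Complex.exp ((β : ℝ) * Complex.I) * z := by
      funext z
      rw [rotation_apply, Circle.coe_exp]
    rwa [this] at h
  exact h2.comp h1

theorem baumkuchen_stmt7
    (O P : ℂ) (R r : ℝ) (hr : 0 < r) (hrR : r < R)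
    (hP : dist O P = r)
    (n : ℕ) (hn : 4 ≤ n) (hev : Even n) (θ : ℝ) :
    ∀ k : ℕ, 1 ≤ k → k ≤ n →
      volume ((Metric.closedBall O R \ interior (Metric.closedBall O r)) ∩
          angularSector P (θ + ((k - 1 : ℕ) : ℝ) * π / n) (θ + (k : ℝ) * π / n)) +
      volume ((Metric.closedBall O R \ interior (Metric.closedBall O r)) ∩
          angularSector P (θ + ((k + n - 1 : ℕ) : ℝ) * π / n) (θ + ((k + n : ℕ) : ℝ) * π / n)) =
      ENNReal.ofReal (1 / n * (π * (R ^ 2 - r ^ 2))) := by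
  intro k hk1 hkn
  have hπ : 0 < π := pi_pos
  have hn0 : (0 : ℝ) < n := by
    have : (4 : ℝ) ≤ n := by exact_mod_cast hn
    linarith
  have hδ0 : 0 < π / n := by positivity
  have hδ4 : π / n ≤ π / 4 := by
    apply div_le_div_of_nonneg_left hπ.le (by norm_num)
    exact_mod_cast hn
  set a : ℝ := θ + ((k : ℝ) - 1) * π / n with hadef
  set β : ℝ := -(π / 2) - a with hβdef
  set f : ℂ → ℂ := fun z => Complex.exp ((β : ℝ) * Complex.I) * (z - P) with hfdef
  set w : ℂ := Complex.exp ((β : ℝ) * Complex.I) * (O - P) with hwdef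
  have hw : ‖w‖ = r := by
    rw [hwdef, norm_mul, Complex.norm_exp_ofReal_mul_I, one_mul, ← Complex.dist_eq]
    exact hP
  have hB : Metric.closedBall O R \ interior (Metric.closedBall O r) =
      f ⁻¹' {z : ℂ | r ≤ ‖z - w‖ ∧ ‖z - w‖ ≤ R} := by
    have habs : ∀ z : ℂ, ‖f z - w‖ = ‖z - O‖ := by
      intro z
      have hzz : f z - w = Complex.exp ((β : ℝ) * Complex.I) * (z - O) := by
        rw [hfdef, hwdef]; ring
      rw [hzz, norm_mul, Complex.norm_exp_ofReal_mul_I, one_mul]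
    rw [interior_closedBall O hr.ne']
    ext z
    simp only [Set.mem_diff, Set.mem_preimage, Set.mem_setOf_eq, Metric.mem_closedBall,
      Metric.mem_ball, Complex.dist_eq, not_lt, habs]
    tauto
  have hc1 : ((k - 1 : ℕ) : ℝ) = (k : ℝ) - 1 := by
    rw [Nat.cast_sub hk1, Nat.cast_one]
  have hc2 : ((k + n - 1 : ℕ) : ℝ) = (k : ℝ) + n - 1 := by
    rw [Nat.cast_sub (le_trans hk1 (Nat.le_add_right k n)), Nat.cast_add, Nat.cast_one]
  have hnne : (n : ℝ) ≠ 0 := ne_of_gt hn0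
  have e1 : θ + ((k - 1 : ℕ) : ℝ) * π / n = a := by rw [hc1, hadef]
  have e2 : θ + (k : ℝ) * π / n = a + π / n := by rw [hadef]; field_simp; ring
  have e3 : θ + ((k + n - 1 : ℕ) : ℝ) * π / n = a + π := by
    rw [hc2, hadef]; field_simp; ring
  have e4 : θ + ((k + n : ℕ) : ℝ) * π / n = a + π / n + π := by
    push_cast
    rw [hadef]; field_simp; ring
  have hS1 : angularSector P a (a + π / n) =
      f ⁻¹' angularSector 0 (-(π / 2)) (-(π / 2) + π / n) := by
    rw [bk_sector_preimage P a (a + π / n) β,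
      show a + β = -(π / 2) by rw [hβdef]; ring,
      show a + π / n + β = -(π / 2) + π / n by rw [hβdef]; ring]
  have hS2 : angularSector P (a + π) (a + π / n + π) =
      f ⁻¹' angularSector 0 (π / 2) (π / 2 + π / n) := by
    rw [bk_sector_preimage P (a + π) (a + π / n + π) β,
      show a + π + β = π / 2 by rw [hβdef]; ring,
      show a + π / n + π + β = π / 2 + π / n by rw [hβdef]; ring]
  rw [e1, e2, e3, e4, hB, hS1, hS2, ← Set.preimage_inter, ← Set.preimage_inter]
  have hmp := bk_map_mp β P
  rw [hmp.measure_preimage ((bk_annulus_measurable w).inter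
      (bk_sector_measurable (by linarith) (by linarith) (by linarith))).nullMeasurableSet,
    hmp.measure_preimage ((bk_annulus_measurable w).inter
      (bk_sector_measurable (by linarith) (by linarith) (by linarith))).nullMeasurableSet,
    bk_key hr hrR w hw hδ0 hδ4]
  congr 1
  field_simp
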